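/- The sequence a_n = (−1)^n · Q_{i,n}/(2n+1) with Q_{i,n} = ∏_{j=1}^{n} ((i+1)/(2j) − 1) tends to 0 as n → ∞, for every fixed natural i ≥ 1. -/

import Mathlib

open Finset Filter

noncomputable def Q (i n : ℕ) : ℝ :=
  ∏ j ∈ Finset.Icc 1 n, (((i : ℝ) + 1) / (2 * (j : ℝ)) - 1)

lemma Q_abs_bound (i n : ℕ) :
    |Q i n| ≤ ∏ j ∈ Finset.Icc 1 i, max |(((i : ℝ) + 1) / (2 * (j : ℝ)) - 1)| 1 := by
  have hfa : ∀ j : ℕ, i < j → |(((i : ℝ) + 1) / (2 * (j : ℝ)) - 1)| ≤ 1 := by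
    intro j hj
    have hj0 : (0 : ℝ) < (j : ℝ) := by
      have : 0 < j := Nat.lt_of_le_of_lt (Nat.zero_le i) hj
      exact_mod_cast this
    have hij : (i : ℝ) + 1 ≤ (j : ℝ) := by exact_mod_cast hj
    have h1 : ((i : ℝ) + 1) / (2 * (j : ℝ)) ≤ 1 := by
      rw [div_le_one (by positivity)]
      nlinarith
    have h2 : 0 < ((i : ℝ) + 1) / (2 * (j : ℝ)) := by positivity
    rw [abs_le]
    constructor <;> nlinarith
  rw [Q, abs_prod]
  rcases le_or_gt n i with h | h
  · calc ∏ j ∈ Finset.Icc 1 n, |(((i : ℝ) + 1) / (2 * (j : ℝ)) - 1)|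
        ≤ ∏ j ∈ Finset.Icc 1 n, max |(((i : ℝ) + 1) / (2 * (j : ℝ)) - 1)| 1 :=
          Finset.prod_le_prod (fun j _ => abs_nonneg _) (fun j _ => le_max_left _ _)
      _ ≤ ∏ j ∈ Finset.Icc 1 i, max |(((i : ℝ) + 1) / (2 * (j : ℝ)) - 1)| 1 := by
          have hsplit2 : Finset.Icc 1 i = Finset.Icc 1 n ∪ Finset.Icc (n + 1) i := by
            ext a; simp only [Finset.mem_union, Finset.mem_Icc]; omega
          rw [hsplit2, Finset.prod_union (by
            rw [Finset.disjoint_left]; intro a ha hb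
            simp only [Finset.mem_Icc] at ha hb; omega)]
          refine le_mul_of_one_le_right
            (Finset.prod_nonneg fun j _ => le_trans zero_le_one (le_max_right _ _)) ?_
          calc (1 : ℝ) = ∏ _j ∈ Finset.Icc (n + 1) i, (1 : ℝ) := by
                rw [Finset.prod_const_one]
            _ ≤ _ := Finset.prod_le_prod (fun j _ => zero_le_one)
                (fun j _ => le_max_right _ _)
  · have hsplit : Finset.Icc 1 n = Finset.Icc 1 i ∪ Finset.Icc (i + 1) n := by
      ext a; simp only [Finset.mem_union, Finset.mem_Icc]; omega
    rw [hsplit, Finset.prod_union (by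
      rw [Finset.disjoint_left]; intro a ha hb
      simp only [Finset.mem_Icc] at ha hb; omega)]
    calc (∏ j ∈ Finset.Icc 1 i, |(((i : ℝ) + 1) / (2 * (j : ℝ)) - 1)|) *
          ∏ j ∈ Finset.Icc (i + 1) n, |(((i : ℝ) + 1) / (2 * (j : ℝ)) - 1)|
        ≤ (∏ j ∈ Finset.Icc 1 i, max |(((i : ℝ) + 1) / (2 * (j : ℝ)) - 1)| 1) * 1 := by
          apply mul_le_mul
          · exact Finset.prod_le_prod (fun j _ => abs_nonneg _) (fun j _ => le_max_left _ _)
          · apply Finset.prod_le_one (fun j _ => abs_nonneg _)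
            intro j hj
            simp only [Finset.mem_Icc] at hj
            exact hfa j (by omega)
          · exact Finset.prod_nonneg fun j _ => abs_nonneg _
          · exact Finset.prod_nonneg fun j _ => le_trans zero_le_one (le_max_right _ _)
      _ = _ := mul_one _

theorem stmt_16 (i : ℕ) (hi : 1 ≤ i) :
    Filter.Tendsto (fun n : ℕ => (-1 : ℝ) ^ n * Q i n / (2 * (n : ℝ) + 1))
      Filter.atTop (nhds 0) := by
  set M : ℝ := ∏ j ∈ Finset.Icc 1 i, max |(((i : ℝ) + 1) / (2 * (j : ℝ)) - 1)| 1 with hM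
  have hM0 : 0 ≤ M := Finset.prod_nonneg fun j _ => le_trans zero_le_one (le_max_right _ _)
  have hlin : Tendsto (fun n : ℕ => 2 * (n : ℝ) + 1) atTop atTop := by
    apply tendsto_atTop_add_const_right
    exact (tendsto_natCast_atTop_atTop).const_mul_atTop (by norm_num)
  have hz : Tendsto (fun n : ℕ => M / (2 * (n : ℝ) + 1)) atTop (nhds 0) := by
    simpa [div_eq_mul_inv] using (hlin.inv_tendsto_atTop).const_mul M
  apply squeeze_zero_norm _ hz
  intro n
  have hn : (0 : ℝ) < 2 * (n : ℝ) + 1 := by positivity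
  rw [Real.norm_eq_abs, abs_div, abs_mul, abs_pow, abs_neg, abs_one, one_pow, one_mul,
    abs_of_pos hn]
  gcongr
  rw [hM]
  exact Q_abs_bound i n
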